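/- Interpolation estimate: Let a < b, k = b − a, q ∈ ℕ, and let f : [a,b] → ℝ be (q+1)-times continuously differentiable. Let π^{[q]} f be the q-th order Taylor polynomial of f around the midpoint x₀ = (a+b)/2. Then for every x ∈ [a,b]: |f(x) − π^{[q]} f(x)| ≤ C_q · k^{q+1} · (1/k) ∫_a^b |f^{(q+1)}(y)| dy, where C_q = 1/(2^q q!). -/

import Mathlib

open MeasureTheory intervalIntegral Set

lemma taylor_aux (a b : ℝ) (hab : a < b) (q : ℕ) (f : ℝ → ℝ)
    (hf : ContDiffOn ℝ (q + 1) f (Set.Icc a b)) (x c d : ℝ)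
    (hac : a ≤ c) (hdb : d ≤ b) (hcd : c ≤ d) (hcx : c ≤ x) (hxd : x ≤ d)
    (hlen : d - c ≤ (b - a) / 2) :
    |taylorWithinEval f q (Set.Icc a b) d x - taylorWithinEval f q (Set.Icc a b) c x| ≤
      (((b - a) / 2) ^ q / q.factorial) *
        ∫ y in a..b, |iteratedDerivWithin (q + 1) f (Set.Icc a b) y| := by
  set F : ℝ → ℝ := iteratedDerivWithin (q + 1) f (Set.Icc a b) with hF
  have hFcont : ContinuousOn F (Set.Icc a b) :=
    hf.continuousOn_iteratedDerivWithin le_rfl (uniqueDiffOn_Icc hab)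
  have hfq : ContDiffOn ℝ q f (Set.Icc a b) := hf.of_le (by exact_mod_cast Nat.le_succ q)
  have hf' : DifferentiableOn ℝ (iteratedDerivWithin q f (Set.Icc a b)) (Set.Ioo a b) :=
    (hf.differentiableOn_iteratedDerivWithin (by exact_mod_cast Nat.lt_succ_self q)
      (uniqueDiffOn_Icc hab)).mono Set.Ioo_subset_Icc_self
  set g : ℝ → ℝ := fun t => taylorWithinEval f q (Set.Icc a b) t x with hg
  set g' : ℝ → ℝ := fun t => ((q.factorial : ℝ)⁻¹ * (x - t) ^ q) * F t with hg'
  have hgcont : ContinuousOn g (Set.Icc a b) :=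
    continuousOn_taylorWithinEval (uniqueDiffOn_Icc hab) hfq
  have hg'cont : ContinuousOn g' (Set.Icc a b) := by
    apply ContinuousOn.mul _ hFcont
    fun_prop
  have hsub : Set.Icc c d ⊆ Set.Icc a b := Set.Icc_subset_Icc hac hdb
  have hint : IntervalIntegrable g' volume c d :=
    (hg'cont.mono hsub).intervalIntegrable_of_Icc hcd
  have hderiv : ∀ t ∈ Set.Ioo c d, HasDerivWithinAt g (g' t) (Set.Ioi t) t := by
    intro t ht
    have ht' : t ∈ Set.Ioo a b := ⟨lt_of_le_of_lt hac ht.1, lt_of_lt_of_le ht.2 hdb⟩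
    have := taylorWithinEval_hasDerivAt_Ioo x hab ht' hfq hf'
    exact (this.congr_deriv (by simp [hg', hF, smul_eq_mul])).hasDerivWithinAt
  have heq : ∫ t in c..d, g' t = g d - g c :=
    integral_eq_sub_of_hasDeriv_right_of_le hcd (hgcont.mono hsub) hderiv hint
  have hFi : IntervalIntegrable (fun y => |F y|) volume a b :=
    (hFcont.abs).intervalIntegrable_of_Icc hab.le
  have habs : ∀ t ∈ Set.Icc c d, |g' t| ≤ (((b - a) / 2) ^ q / q.factorial) * |F t| := by
    intro t ht
    have hxt : |x - t| ≤ (b - a) / 2 := by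
      rw [abs_le]; constructor <;> [linarith [ht.2]; linarith [ht.1]]
    have h1 : |(x - t) ^ q| ≤ ((b - a) / 2) ^ q := by
      rw [abs_pow]; exact pow_le_pow_left₀ (abs_nonneg _) hxt q
    have h2 : (0:ℝ) < q.factorial := by positivity
    calc |g' t| = (q.factorial : ℝ)⁻¹ * |(x - t) ^ q| * |F t| := by
          rw [hg', abs_mul, abs_mul, abs_of_nonneg (by positivity : (0:ℝ) ≤ (q.factorial : ℝ)⁻¹)]
      _ ≤ (q.factorial : ℝ)⁻¹ * ((b - a) / 2) ^ q * |F t| := by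
          gcongr
      _ = (((b - a) / 2) ^ q / q.factorial) * |F t| := by ring
  calc |g d - g c| = |∫ t in c..d, g' t| := by rw [heq]
    _ ≤ ∫ t in c..d, |g' t| := by
        simpa only [Real.norm_eq_abs] using norm_integral_le_integral_norm (f := g') hcd
    _ ≤ ∫ t in c..d, (((b - a) / 2) ^ q / q.factorial) * |F t| :=
        integral_mono_on hcd (hint.abs) ((hFi.mono_set (by
          rw [Set.uIcc_of_le hcd, Set.uIcc_of_le hab.le]; exact hsub)).const_mul _) habs
    _ = (((b - a) / 2) ^ q / q.factorial) * ∫ t in c..d, |F t| := by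
        rw [intervalIntegral.integral_const_mul]
    _ ≤ (((b - a) / 2) ^ q / q.factorial) * ∫ y in a..b, |F y| := by
        refine mul_le_mul_of_nonneg_left ?_ (div_nonneg (pow_nonneg (by linarith) q) (by positivity))
        exact integral_mono_interval hac hcd hdb
          (Filter.Eventually.of_forall fun y => abs_nonneg _) hFi

theorem taylor_midpoint_interpolation_estimate
    (a b : ℝ) (hab : a < b) (q : ℕ) (f : ℝ → ℝ)
    (hf : ContDiffOn ℝ (q + 1) f (Set.Icc a b)) :
    ∀ x ∈ Set.Icc a b,
      |f x - taylorWithinEval f q (Set.Icc a b) ((a + b) / 2) x| ≤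
        (1 / (2 ^ q * (Nat.factorial q) : ℝ)) * (b - a) ^ (q + 1) *
          ((1 / (b - a)) *
            ∫ y in a..b, |iteratedDerivWithin (q + 1) f (Set.Icc a b) y|) := by
  intro x hx
  have hk : (0:ℝ) < b - a := sub_pos.2 hab
  set x₀ : ℝ := (a + b) / 2 with hx₀
  set I : ℝ := ∫ y in a..b, |iteratedDerivWithin (q + 1) f (Set.Icc a b) y| with hI
  have hrhs : (1 / (2 ^ q * (Nat.factorial q) : ℝ)) * (b - a) ^ (q + 1) * ((1 / (b - a)) * I)
      = (((b - a) / 2) ^ q / q.factorial) * I := by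
    rw [div_pow, pow_succ]
    field_simp
  rw [hrhs]
  have hfx : f x = taylorWithinEval f q (Set.Icc a b) x x := (taylorWithinEval_self f q _ x).symm
  rcases le_total x₀ x with h | h
  · have := taylor_aux a b hab q f hf x x₀ x (by simp [hx₀]; linarith) hx.2 h h le_rfl
      (by simp [hx₀]; linarith [hx.2])
    rw [hfx]
    exact this
  · have := taylor_aux a b hab q f hf x x x₀ hx.1 (by simp [hx₀]; linarith) h le_rfl h
      (by simp [hx₀]; linarith [hx.1])
    rw [hfx, abs_sub_comm]
    exact this
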